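/- Two Ferrers graphs are isomorphic if and only if their associated integer partitions are equal or conjugate to each other. -/

import Mathlib

attribute [local instance] Classical.propDecidable

noncomputable section

/-- A Ferrers graph, encoded by its biadjacency pattern between row vertices
`r_1, …, r_n` (indexed by `Fin n`) and column vertices `c_1, …, c_m`: if `{r_i, c_j}`
is an edge then so is `{r_l, c_k}` for all `l ≥ i`, `k ≤ j`, and `{r_1, c_1}` and
`{r_n, c_m}` are edges. -/
structure FerrersGraph where
  n : ℕ
  m : ℕ
  hn : 0 < n
  hm : 0 < m
  adj : Fin n → Fin m → Prop
  mono : ∀ i i' : Fin n, ∀ j j' : Fin m, adj i j → i ≤ i' → j' ≤ j → adj i' j'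
  corner1 : adj ⟨0, hn⟩ ⟨0, hm⟩
  corner2 : adj ⟨n - 1, Nat.sub_lt hn one_pos⟩ ⟨m - 1, Nat.sub_lt hm one_pos⟩

/-- The bipartite simple graph associated to a Ferrers graph. -/
def FerrersGraph.graph (G : FerrersGraph) : SimpleGraph (Fin G.n ⊕ Fin G.m) :=
  SimpleGraph.fromRel fun u v =>
    match u, v with
    | Sum.inl i, Sum.inr j => G.adj i j
    | _, _ => False

/-- The partition associated to a Ferrers graph (the degrees of the row vertices),
recorded as a multiset. -/
def FerrersGraph.rowPartition (G : FerrersGraph) : Multiset ℕ :=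
  Finset.univ.val.map fun i : Fin G.n => (Finset.univ.filter fun j => G.adj i j).card

/-- The conjugate of the associated partition (the degrees of the column vertices),
recorded as a multiset. -/
def FerrersGraph.colPartition (G : FerrersGraph) : Multiset ℕ :=
  Finset.univ.val.map fun j : Fin G.m => (Finset.univ.filter fun i => G.adj i j).card

namespace FerrersGraph

variable (K : FerrersGraph)

/-- Row degree. -/
def d (i : Fin K.n) : ℕ := (Finset.univ.filter fun j => K.adj i j).card

/-- Column degree. -/
def e (j : Fin K.m) : ℕ := (Finset.univ.filter fun i => K.adj i j).card

lemma rowPartition_def : K.rowPartition = Finset.univ.val.map K.d := rfl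

lemma colPartition_def : K.colPartition = Finset.univ.val.map K.e := rfl

lemma adj_first (i : Fin K.n) : K.adj i ⟨0, K.hm⟩ :=
  K.mono ⟨0, K.hn⟩ i _ _ K.corner1 (by rw [Fin.le_def]; exact Nat.zero_le _) le_rfl

lemma adj_last (j : Fin K.m) : K.adj ⟨K.n - 1, Nat.sub_lt K.hn one_pos⟩ j :=
  K.mono _ _ ⟨K.m - 1, Nat.sub_lt K.hm one_pos⟩ j K.corner2 le_rfl
    (by rw [Fin.le_def]; exact Nat.le_sub_one_of_lt j.isLt)

lemma adj_iff_d (i : Fin K.n) (j : Fin K.m) : K.adj i j ↔ j.val < K.d i := by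
  constructor
  · intro h
    have hs : Finset.Iic j ⊆ Finset.univ.filter fun j' => K.adj i j' := by
      intro j' hj'
      simp only [Finset.mem_Iic] at hj'
      simp only [Finset.mem_filter, Finset.mem_univ, true_and]
      exact K.mono i i j j' h le_rfl hj'
    have := Finset.card_le_card hs
    rw [Fin.card_Iic] at this
    unfold d
    omega
  · intro h
    by_contra hc
    have hs : (Finset.univ.filter fun j' => K.adj i j') ⊆ Finset.Iio j := by
      intro j' hj'
      simp only [Finset.mem_filter, Finset.mem_univ, true_and] at hj'
      simp only [Finset.mem_Iio]
      by_contra hlt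
      exact hc (K.mono i i j' j hj' le_rfl (le_of_not_gt hlt))
    have := Finset.card_le_card hs
    rw [Fin.card_Iio] at this
    unfold d at h
    omega

lemma adj_iff_e (i : Fin K.n) (j : Fin K.m) : K.adj i j ↔ K.n - K.e j ≤ i.val := by
  constructor
  · intro h
    have hs : Finset.Ici i ⊆ Finset.univ.filter fun i' => K.adj i' j := by
      intro i' hi'
      simp only [Finset.mem_Ici] at hi'
      simp only [Finset.mem_filter, Finset.mem_univ, true_and]
      exact K.mono i i' j j h hi' le_rfl
    have := Finset.card_le_card hs
    rw [Fin.card_Ici] at this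
    have hi := i.isLt
    unfold e
    omega
  · intro h
    by_contra hc
    have hs : (Finset.univ.filter fun i' => K.adj i' j) ⊆ Finset.Ioi i := by
      intro i' hi'
      simp only [Finset.mem_filter, Finset.mem_univ, true_and] at hi'
      simp only [Finset.mem_Ioi]
      by_contra hlt
      exact hc (K.mono i' i j j hi' (le_of_not_gt hlt) le_rfl)
    have := Finset.card_le_card hs
    rw [Fin.card_Ioi] at this
    have hi := i.isLt
    have hn := K.hn
    unfold e at h
    omega

lemma d_mono : Monotone K.d := by
  intro i i' h
  apply Finset.card_le_card
  intro j hj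
  simp only [Finset.mem_filter, Finset.mem_univ, true_and] at hj ⊢
  exact K.mono i i' j j hj h le_rfl

lemma e_anti : Antitone K.e := by
  intro j j' h
  apply Finset.card_le_card
  intro i hi
  simp only [Finset.mem_filter, Finset.mem_univ, true_and] at hi ⊢
  exact K.mono i i j' j hi le_rfl h

lemma d_le (i : Fin K.n) : K.d i ≤ K.m := by
  calc K.d i ≤ Finset.univ.card := Finset.card_filter_le _ _
    _ = K.m := by simp

lemma e_le (j : Fin K.m) : K.e j ≤ K.n := by
  calc K.e j ≤ Finset.univ.card := Finset.card_filter_le _ _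
    _ = K.n := by simp

lemma d_pos (i : Fin K.n) : 1 ≤ K.d i := by
  have := (K.adj_iff_d i ⟨0, K.hm⟩).mp (K.adj_first i)
  omega

lemma e_pos (j : Fin K.m) : 1 ≤ K.e j := by
  have := (K.adj_iff_e ⟨K.n - 1, Nat.sub_lt K.hn one_pos⟩ j).mp (K.adj_last j)
  have := K.e_le j
  have := K.hn
  omega

lemma d_last : K.d ⟨K.n - 1, Nat.sub_lt K.hn one_pos⟩ = K.m := by
  have h1 := (K.adj_iff_d _ ⟨K.m - 1, Nat.sub_lt K.hm one_pos⟩).mp K.corner2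
  have h2 := K.d_le ⟨K.n - 1, Nat.sub_lt K.hn one_pos⟩
  have := K.hm
  simp only at h1
  omega

lemma e_first : K.e ⟨0, K.hm⟩ = K.n := by
  have h1 := (K.adj_iff_e ⟨0, K.hn⟩ ⟨0, K.hm⟩).mp K.corner1
  have h2 := K.e_le ⟨0, K.hm⟩
  have := K.hn
  simp only at h1
  omega

lemma adj_lr (i : Fin K.n) (j : Fin K.m) :
    K.graph.Adj (Sum.inl i) (Sum.inr j) ↔ K.adj i j := by
  simp [graph, SimpleGraph.fromRel_adj]

lemma adj_rl (i : Fin K.n) (j : Fin K.m) :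
    K.graph.Adj (Sum.inr j) (Sum.inl i) ↔ K.adj i j := by
  simp [graph, SimpleGraph.fromRel_adj]

lemma not_adj_ll (i i' : Fin K.n) : ¬ K.graph.Adj (Sum.inl i) (Sum.inl i') := by
  simp [graph, SimpleGraph.fromRel_adj]

lemma not_adj_rr (j j' : Fin K.m) : ¬ K.graph.Adj (Sum.inr j) (Sum.inr j') := by
  simp [graph, SimpleGraph.fromRel_adj]

lemma adj_isLeft {u v : Fin K.n ⊕ Fin K.m} (h : K.graph.Adj u v) :
    u.isLeft = !v.isLeft := by
  rcases u with i | j <;> rcases v with i' | j'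
  · exact absurd h (K.not_adj_ll i i')
  · rfl
  · rfl
  · exact absurd h (K.not_adj_rr j j')

end FerrersGraph

open FerrersGraph in
lemma ferrers_isLeft_const {G H : FerrersGraph} (f : G.graph ≃g H.graph) (i i' : Fin G.n) :
    (f (Sum.inl i)).isLeft = (f (Sum.inl i')).isLeft := by
  have h1 : H.graph.Adj (f (Sum.inl i)) (f (Sum.inr ⟨0, G.hm⟩)) :=
    f.map_rel_iff.mpr ((G.adj_lr _ _).mpr (G.adj_first i))
  have h2 : H.graph.Adj (f (Sum.inr ⟨0, G.hm⟩)) (f (Sum.inl i')) :=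
    f.map_rel_iff.mpr ((G.adj_rl _ _).mpr (G.adj_first i'))
  rw [H.adj_isLeft h1, H.adj_isLeft h2, Bool.not_not]

open FerrersGraph in
lemma ferrers_isLeft_inr {G H : FerrersGraph} (f : G.graph ≃g H.graph) (j : Fin G.m) :
    (f (Sum.inr j)).isLeft
      = !(f (Sum.inl ⟨G.n - 1, Nat.sub_lt G.hn one_pos⟩)).isLeft := by
  have h1 : H.graph.Adj (f (Sum.inr j)) (f (Sum.inl ⟨G.n - 1, Nat.sub_lt G.hn one_pos⟩)) :=
    f.map_rel_iff.mpr ((G.adj_rl _ _).mpr (G.adj_last j))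
  exact H.adj_isLeft h1

open FerrersGraph in
lemma ferrers_iso_same {G H : FerrersGraph} (f : G.graph ≃g H.graph)
    (hL : ∀ i, (f (Sum.inl i)).isLeft = true) : G.rowPartition = H.rowPartition := by
  have hR : ∀ j, (f (Sum.inr j)).isLeft = false := by
    intro j
    rw [ferrers_isLeft_inr f j, hL]
    rfl
  have exL : ∀ i, ∃ k, f (Sum.inl i) = Sum.inl k := by
    intro i
    rcases hfi : f (Sum.inl i) with k | k
    · exact ⟨k, rfl⟩
    · exfalso; have := hL i; rw [hfi] at this; simp at this
  have exR : ∀ j, ∃ k, f (Sum.inr j) = Sum.inr k := by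
    intro j
    rcases hfj : f (Sum.inr j) with k | k
    · exfalso; have := hR j; rw [hfj] at this; simp at this
    · exact ⟨k, rfl⟩
  have exL' : ∀ k, ∃ i, f.symm (Sum.inl k) = Sum.inl i := by
    intro k
    rcases h' : f.symm (Sum.inl k) with i | j
    · exact ⟨i, rfl⟩
    · exfalso
      have h2 : (Sum.inl k : Fin H.n ⊕ Fin H.m) = f (Sum.inr j) := by
        rw [← h', f.apply_symm_apply]
      obtain ⟨k', hk'⟩ := exR j
      rw [hk'] at h2
      exact Sum.inl_ne_inr h2
  have exR' : ∀ k, ∃ j, f.symm (Sum.inr k) = Sum.inr j := by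
    intro k
    rcases h' : f.symm (Sum.inr k) with i | j
    · exfalso
      have h2 : (Sum.inr k : Fin H.n ⊕ Fin H.m) = f (Sum.inl i) := by
        rw [← h', f.apply_symm_apply]
      obtain ⟨k', hk'⟩ := exL i
      rw [hk'] at h2
      exact Sum.inr_ne_inl h2
    · exact ⟨j, rfl⟩
  choose F₁ hF₁ using exL
  choose F₂ hF₂ using exR
  choose G₁ hG₁ using exL'
  choose G₂ hG₂ using exR'
  have hli₁ : ∀ i, G₁ (F₁ i) = i := fun i => by
    have h := hG₁ (F₁ i)
    rw [← hF₁ i, f.symm_apply_apply] at h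
    exact (Sum.inl.inj h).symm
  have hri₁ : ∀ k, F₁ (G₁ k) = k := fun k => by
    have h := hF₁ (G₁ k)
    rw [← hG₁ k, f.apply_symm_apply] at h
    exact (Sum.inl.inj h).symm
  have hli₂ : ∀ j, G₂ (F₂ j) = j := fun j => by
    have h := hG₂ (F₂ j)
    rw [← hF₂ j, f.symm_apply_apply] at h
    exact (Sum.inr.inj h).symm
  have hri₂ : ∀ k, F₂ (G₂ k) = k := fun k => by
    have h := hF₂ (G₂ k)
    rw [← hG₂ k, f.apply_symm_apply] at h
    exact (Sum.inr.inj h).symm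
  have haa : ∀ i j, G.adj i j ↔ H.adj (F₁ i) (F₂ j) := by
    intro i j
    rw [← G.adj_lr, ← H.adj_lr, ← hF₁ i, ← hF₂ j, f.map_rel_iff]
  have hd : ∀ i, G.d i = H.d (F₁ i) := by
    intro i
    have h1 : G.d i = Fintype.card {j // G.adj i j} := (Fintype.card_subtype _).symm
    have h2 : H.d (F₁ i) = Fintype.card {b // H.adj (F₁ i) b} := (Fintype.card_subtype _).symm
    rw [h1, h2]
    exact Fintype.card_congr
      (Equiv.subtypeEquiv (⟨F₂, G₂, hli₂, hri₂⟩ : Fin G.m ≃ Fin H.m) fun j => haa i j)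
  have huniv : Multiset.map F₁ Finset.univ.val = Finset.univ.val :=
    congrArg Finset.val
      (Finset.map_univ_equiv (⟨F₁, G₁, hli₁, hri₁⟩ : Fin G.n ≃ Fin H.n))
  calc G.rowPartition = Multiset.map (fun i => H.d (F₁ i)) Finset.univ.val :=
        Multiset.map_congr rfl (fun i _ => hd i)
    _ = Multiset.map H.d (Multiset.map F₁ Finset.univ.val) := (Multiset.map_map H.d F₁ _).symm
    _ = Multiset.map H.d Finset.univ.val := by rw [huniv]
    _ = H.rowPartition := rfl

open FerrersGraph in
lemma ferrers_iso_cross {G H : FerrersGraph} (f : G.graph ≃g H.graph)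
    (hL : ∀ i, (f (Sum.inl i)).isLeft = false) : G.rowPartition = H.colPartition := by
  have hR : ∀ j, (f (Sum.inr j)).isLeft = true := by
    intro j
    rw [ferrers_isLeft_inr f j, hL]
    rfl
  have exL : ∀ i, ∃ k, f (Sum.inl i) = Sum.inr k := by
    intro i
    rcases hfi : f (Sum.inl i) with k | k
    · exfalso; have := hL i; rw [hfi] at this; simp at this
    · exact ⟨k, rfl⟩
  have exR : ∀ j, ∃ k, f (Sum.inr j) = Sum.inl k := by
    intro j
    rcases hfj : f (Sum.inr j) with k | k
    · exact ⟨k, rfl⟩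
    · exfalso; have := hR j; rw [hfj] at this; simp at this
  have exL' : ∀ k, ∃ j, f.symm (Sum.inl k) = Sum.inr j := by
    intro k
    rcases h' : f.symm (Sum.inl k) with i | j
    · exfalso
      have h2 : (Sum.inl k : Fin H.n ⊕ Fin H.m) = f (Sum.inl i) := by
        rw [← h', f.apply_symm_apply]
      obtain ⟨k', hk'⟩ := exL i
      rw [hk'] at h2
      exact Sum.inl_ne_inr h2
    · exact ⟨j, rfl⟩
  have exR' : ∀ k, ∃ i, f.symm (Sum.inr k) = Sum.inl i := by
    intro k
    rcases h' : f.symm (Sum.inr k) with i | j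
    · exact ⟨i, rfl⟩
    · exfalso
      have h2 : (Sum.inr k : Fin H.n ⊕ Fin H.m) = f (Sum.inr j) := by
        rw [← h', f.apply_symm_apply]
      obtain ⟨k', hk'⟩ := exR j
      rw [hk'] at h2
      exact Sum.inr_ne_inl h2
  choose F₁ hF₁ using exL
  choose F₂ hF₂ using exR
  choose G₁ hG₁ using exL'
  choose G₂ hG₂ using exR'
  have hli₁ : ∀ i, G₂ (F₁ i) = i := fun i => by
    have h := hG₂ (F₁ i)
    rw [← hF₁ i, f.symm_apply_apply] at h
    exact (Sum.inl.inj h).symm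
  have hri₁ : ∀ k, F₁ (G₂ k) = k := fun k => by
    have h := hF₁ (G₂ k)
    rw [← hG₂ k, f.apply_symm_apply] at h
    exact (Sum.inr.inj h).symm
  have hli₂ : ∀ j, G₁ (F₂ j) = j := fun j => by
    have h := hG₁ (F₂ j)
    rw [← hF₂ j, f.symm_apply_apply] at h
    exact (Sum.inr.inj h).symm
  have hri₂ : ∀ k, F₂ (G₁ k) = k := fun k => by
    have h := hF₂ (G₁ k)
    rw [← hG₁ k, f.apply_symm_apply] at h
    exact (Sum.inl.inj h).symm
  have haa : ∀ i j, G.adj i j ↔ H.adj (F₂ j) (F₁ i) := by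
    intro i j
    rw [← G.adj_lr, ← H.adj_rl, ← hF₁ i, ← hF₂ j, f.map_rel_iff]
  have hd : ∀ i, G.d i = H.e (F₁ i) := by
    intro i
    have h1 : G.d i = Fintype.card {j // G.adj i j} := (Fintype.card_subtype _).symm
    have h2 : H.e (F₁ i) = Fintype.card {a // H.adj a (F₁ i)} := (Fintype.card_subtype _).symm
    rw [h1, h2]
    exact Fintype.card_congr
      (Equiv.subtypeEquiv (⟨F₂, G₁, hli₂, hri₂⟩ : Fin G.m ≃ Fin H.n) fun j => haa i j)
  have huniv : Multiset.map F₁ Finset.univ.val = Finset.univ.val :=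
    congrArg Finset.val
      (Finset.map_univ_equiv (⟨F₁, G₂, hli₁, hri₁⟩ : Fin G.n ≃ Fin H.m))
  calc G.rowPartition = Multiset.map (fun i => H.e (F₁ i)) Finset.univ.val :=
        Multiset.map_congr rfl (fun i _ => hd i)
    _ = Multiset.map H.e (Multiset.map F₁ Finset.univ.val) := (Multiset.map_map H.e F₁ _).symm
    _ = Multiset.map H.e Finset.univ.val := by rw [huniv]
    _ = H.colPartition := rfl

open FerrersGraph in
lemma ferrers_card_rowPartition (G : FerrersGraph) :
    Multiset.card G.rowPartition = G.n := by
  simp [rowPartition]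

open FerrersGraph in
lemma ferrers_card_colPartition (G : FerrersGraph) :
    Multiset.card G.colPartition = G.m := by
  simp [colPartition]

/-- pointwise equality from equal `ofFn` lists -/
lemma ofFn_eq_apply {n m : ℕ} (f : Fin n → ℕ) (g : Fin m → ℕ) (hn : n = m)
    (heq : List.ofFn f = List.ofFn g) (i : Fin n) : f i = g (Fin.cast hn i) := by
  have h1 : (List.ofFn f)[i.val]'(by simp) = f i := by simp
  have h2 : (List.ofFn g)[i.val]'(by simp; omega) = g ⟨i.val, by omega⟩ := by simp
  simp only [heq] at h1
  exact h1.symm.trans (h2.trans rfl)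

open FerrersGraph in
lemma ferrers_iso_of_row_eq {G H : FerrersGraph}
    (h : G.rowPartition = H.rowPartition) : Nonempty (G.graph ≃g H.graph) := by
  have hn : G.n = H.n := by
    have := congrArg Multiset.card h
    rwa [ferrers_card_rowPartition, ferrers_card_rowPartition] at this
  have hperm : List.Perm (List.ofFn G.d) (List.ofFn H.d) := by
    rw [← Multiset.coe_eq_coe, ← Fin.univ_val_map, ← Fin.univ_val_map]
    exact h
  have heq : List.ofFn G.d = List.ofFn H.d :=
    List.Perm.eq_of_sortedLE
      (List.sortedLE_ofFn_iff.mpr G.d_mono) (List.sortedLE_ofFn_iff.mpr H.d_mono) hperm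
  have hd : ∀ i : Fin G.n, G.d i = H.d (Fin.cast hn i) :=
    fun i => ofFn_eq_apply G.d H.d hn heq i
  have hm : G.m = H.m := by
    have h1 := hd ⟨G.n - 1, Nat.sub_lt G.hn one_pos⟩
    rw [G.d_last] at h1
    have h2 : (Fin.cast hn ⟨G.n - 1, Nat.sub_lt G.hn one_pos⟩ : Fin H.n)
        = ⟨H.n - 1, Nat.sub_lt H.hn one_pos⟩ := by
      apply Fin.ext
      simp [hn]
    rw [h2, H.d_last] at h1
    exact h1
  refine ⟨⟨Equiv.sumCongr (finCongr hn) (finCongr hm), @fun a b => ?_⟩⟩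
  rcases a with i | j <;> rcases b with i' | j'
  · exact iff_of_false (H.not_adj_ll _ _) (G.not_adj_ll _ _)
  · show H.graph.Adj (Sum.inl (Fin.cast hn i)) (Sum.inr (Fin.cast hm j')) ↔ _
    rw [H.adj_lr, G.adj_lr, H.adj_iff_d, G.adj_iff_d, ← hd i, Fin.coe_cast]
  · show H.graph.Adj (Sum.inr (Fin.cast hm j)) (Sum.inl (Fin.cast hn i')) ↔ _
    rw [H.adj_rl, G.adj_rl, H.adj_iff_d, G.adj_iff_d, ← hd i', Fin.coe_cast]
  · exact iff_of_false (H.not_adj_rr _ _) (G.not_adj_rr _ _)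

open FerrersGraph in
lemma ferrers_iso_of_row_eq_col {G H : FerrersGraph}
    (h : G.rowPartition = H.colPartition) : Nonempty (G.graph ≃g H.graph) := by
  have hn : G.n = H.m := by
    have := congrArg Multiset.card h
    rwa [ferrers_card_rowPartition, ferrers_card_colPartition] at this
  -- rewrite colPartition via reversal
  have huniv : Multiset.map (Fin.rev : Fin H.m → Fin H.m) Finset.univ.val
      = Finset.univ.val :=
    congrArg Finset.val (Finset.map_univ_equiv (Fin.revPerm : Equiv.Perm (Fin H.m)))
  have hcol : H.colPartition = Finset.univ.val.map (fun j => H.e (Fin.rev j)) := by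
    calc H.colPartition = Multiset.map H.e Finset.univ.val := rfl
      _ = Multiset.map H.e (Multiset.map Fin.rev Finset.univ.val) := by rw [huniv]
      _ = _ := Multiset.map_map H.e Fin.rev _
  have hmono : Monotone (fun j : Fin H.m => H.e (Fin.rev j)) := by
    intro a b hab
    exact H.e_anti (by rwa [Fin.rev_le_rev])
  have hperm : List.Perm (List.ofFn G.d) (List.ofFn (fun j : Fin H.m => H.e (Fin.rev j))) := by
    rw [← Multiset.coe_eq_coe, ← Fin.univ_val_map, ← Fin.univ_val_map]
    rw [← hcol]
    exact h
  have heq : List.ofFn G.d = List.ofFn (fun j : Fin H.m => H.e (Fin.rev j)) :=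
    List.Perm.eq_of_sortedLE
      (List.sortedLE_ofFn_iff.mpr G.d_mono) (List.sortedLE_ofFn_iff.mpr hmono) hperm
  have hd : ∀ i : Fin G.n, G.d i = H.e (Fin.rev (Fin.cast hn i)) :=
    fun i => ofFn_eq_apply G.d _ hn heq i
  have hm : G.m = H.n := by
    have h1 := hd ⟨G.n - 1, Nat.sub_lt G.hn one_pos⟩
    rw [G.d_last] at h1
    have h2 : Fin.rev (Fin.cast hn ⟨G.n - 1, Nat.sub_lt G.hn one_pos⟩) = ⟨0, H.hm⟩ := by
      apply Fin.ext
      have := H.hm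
      simp only [Fin.val_rev, Fin.coe_cast]
      omega
    rw [h2, H.e_first] at h1
    exact h1
  refine ⟨⟨(Equiv.sumCongr ((finCongr hn).trans Fin.revPerm)
      ((finCongr hm).trans Fin.revPerm)).trans
      (Equiv.sumComm (Fin H.m) (Fin H.n)), @fun a b => ?_⟩⟩
  rcases a with i | j <;> rcases b with i' | j'
  · exact iff_of_false (H.not_adj_rr _ _) (G.not_adj_ll _ _)
  · show H.graph.Adj (Sum.inr (Fin.rev (Fin.cast hn i))) (Sum.inl (Fin.rev (Fin.cast hm j'))) ↔ _
    rw [H.adj_rl, G.adj_lr, H.adj_iff_e, G.adj_iff_d, hd i]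
    have hE1 := H.e_pos (Fin.rev (Fin.cast hn i))
    have hE2 := H.e_le (Fin.rev (Fin.cast hn i))
    have hj : j'.val < H.n := by have := j'.isLt; omega
    rw [Fin.val_rev, Fin.coe_cast]
    omega
  · show H.graph.Adj (Sum.inl (Fin.rev (Fin.cast hm j))) (Sum.inr (Fin.rev (Fin.cast hn i'))) ↔ _
    rw [H.adj_lr, G.adj_rl, H.adj_iff_e, G.adj_iff_d, hd i']
    have hE1 := H.e_pos (Fin.rev (Fin.cast hn i'))
    have hE2 := H.e_le (Fin.rev (Fin.cast hn i'))
    have hj : j.val < H.n := by have := j.isLt; omega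
    rw [Fin.val_rev, Fin.coe_cast]
    omega
  · exact iff_of_false (H.not_adj_ll _ _) (G.not_adj_rr _ _)

/-- Two Ferrers graphs are isomorphic if and only if their associated partitions are
equal or conjugate to each other. -/
theorem ferrersGraph_iso_iff_partition_eq_or_conj (G H : FerrersGraph) :
    Nonempty (G.graph ≃g H.graph) ↔
      G.rowPartition = H.rowPartition ∨ G.rowPartition = H.colPartition := by
  constructor
  · rintro ⟨f⟩
    cases hb : (f (Sum.inl ⟨0, G.hn⟩)).isLeft with
    | true =>
      left
      exact ferrers_iso_same f (fun i => (ferrers_isLeft_const f i ⟨0, G.hn⟩).trans hb)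
    | false =>
      right
      exact ferrers_iso_cross f (fun i => (ferrers_isLeft_const f i ⟨0, G.hn⟩).trans hb)
  · rintro (h | h)
    · exact ferrers_iso_of_row_eq h
    · exact ferrers_iso_of_row_eq_col h

end
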